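/- arXiv:2010.14410 — 2 statements merged into one kernel-verified Lean document; each statement's English description precedes it below -/
import Mathlib

section
/- Let K > 0. There is a constant A > 0 depending only on K such that for all integers n and N with n > 2(K+1)², 2 ≤ N and N³ ≤ n, and all real numbers t_{ij} ∈ [−K−1, K+1] (1 ≤ i < j ≤ N), there exists a real number θ with |θ| ≤ A·N³/n such that ∏_{1≤i<j≤N} cos(t_{ij}/√n)^{n−i−1} = (1 + θ) · ∏_{1≤i<j≤N} e^{−t_{ij}²/2}. -/
set_option maxHeartbeats 1000000


open Real Finset

/-- For `x² ≤ 1/2`, `cos x > 0` and `|log (cos x) + x²/2| ≤ x⁴`. -/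
lemma log_cos_bound_aux {x : ℝ} (hx : x ^ 2 ≤ 1/2) :
    0 < Real.cos x ∧ |Real.log (Real.cos x) + x ^ 2 / 2| ≤ x ^ 4 := by
  have hx2 : 0 ≤ x ^ 2 := sq_nonneg x
  have hx4 : 0 ≤ x ^ 4 := by positivity
  have hx4' : x ^ 4 ≤ 1/4 := by nlinarith
  have hx1 : |x| ≤ 1 := by
    nlinarith [sq_abs x, abs_nonneg x]
  have hb := Real.cos_bound hx1
  have habs4 : |x| ^ 4 = x ^ 4 := by
    rw [← abs_pow, abs_of_nonneg hx4]
  rw [habs4] at hb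
  rw [abs_le] at hb
  have hcpos : 0 < Real.cos x := by nlinarith [hb.1]
  refine ⟨hcpos, ?_⟩
  have hlog_le : Real.log (Real.cos x) ≤ Real.cos x - 1 :=
    Real.log_le_sub_one_of_pos hcpos
  have hlog_ge : 1 - (Real.cos x)⁻¹ ≤ Real.log (Real.cos x) :=
    Real.one_sub_inv_le_log_of_pos hcpos
  have hinv : (Real.cos x)⁻¹ * Real.cos x = 1 := inv_mul_cancel₀ (ne_of_gt hcpos)
  have hinvpos : 0 < (Real.cos x)⁻¹ := inv_pos.mpr hcpos
  rw [abs_le]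
  constructor
  · -- lower bound: need 1 - (cos x)⁻¹ + x²/2 ≥ -x⁴,
    -- i.e. (cos x)⁻¹ ≤ 1 + x²/2 + x⁴, i.e. 1 ≤ cos x * (1 + x²/2 + x⁴)
    have key : 1 ≤ Real.cos x * (1 + x ^ 2 / 2 + x ^ 4) := by
      nlinarith [hb.1, hx2, hx4, sq_nonneg (x^2), sq_nonneg (x^3), mul_nonneg hx2 hx4]
    have h2 : (Real.cos x)⁻¹ ≤ 1 + x ^ 2 / 2 + x ^ 4 := by
      rw [inv_le_iff_one_le_mul₀ hcpos]
      linarith [key]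
    linarith
  · linarith [hb.2]

/-- `|exp u - 1| ≤ |u| * exp |u|`. -/
lemma abs_exp_sub_one_le' (u : ℝ) : |Real.exp u - 1| ≤ |u| * Real.exp |u| := by
  have h1 : Real.exp u ≤ Real.exp |u| := Real.exp_le_exp.mpr (le_abs_self u)
  have h2 : |u| + 1 ≤ Real.exp |u| := Real.add_one_le_exp _
  have h3 : -|u| + 1 ≤ Real.exp (-|u|) := Real.add_one_le_exp _
  have h4 : Real.exp (-|u|) * Real.exp |u| = 1 := by
    rw [← Real.exp_add]; simp
  have h5 : u + 1 ≤ Real.exp u := Real.add_one_le_exp u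
  have hpos : 0 < Real.exp |u| := Real.exp_pos _
  have habs : -|u| ≤ u := neg_abs_le u
  rw [abs_le]
  constructor
  · -- 1 - exp u ≤ |u| * exp |u| : 1 - exp u ≤ -u ≤ |u| ≤ |u| exp|u|
    nlinarith [abs_nonneg u]
  · -- exp u - 1 ≤ exp |u| - 1 ≤ |u| exp |u|
    nlinarith [abs_nonneg u]

/-- ∏_{i<j} cos(t_{ij}/√n)^{n-i-1} = (1+θ)·∏_{i<j} e^{-t_{ij}²/2}
with |θ| ≤ A·N³/n, for t_{ij} ∈ [-K-1, K+1]. -/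
theorem prod_cos_pow_eq_gaussian (K : ℝ) (hK : 0 < K) :
    ∃ A : ℝ, 0 < A ∧
      ∀ (n N : ℕ), 2 * (K + 1) ^ 2 < (n : ℝ) → 2 ≤ N → N ^ 3 ≤ n →
      ∀ t : ℕ → ℕ → ℝ,
        (∀ i j : ℕ, 1 ≤ i → i < j → j ≤ N → t i j ∈ Set.Icc (-K - 1) (K + 1)) →
      ∃ θ : ℝ, |θ| ≤ A * (N : ℝ) ^ 3 / (n : ℝ) ∧
        (∏ i ∈ Finset.Icc 1 N, ∏ j ∈ Finset.Icc (i + 1) N,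
            Real.cos (t i j / Real.sqrt n) ^ (n - i - 1)) =
        (1 + θ) * ∏ i ∈ Finset.Icc 1 N, ∏ j ∈ Finset.Icc (i + 1) N,
            Real.exp (-(t i j) ^ 2 / 2) := by
  set C : ℝ := (K + 1) ^ 4 + (K + 1) ^ 2 with hCdef
  have hC0 : 0 < C := by positivity
  refine ⟨C * Real.exp C, by positivity, ?_⟩
  intro n N hn hN2 hNn t ht
  have hK1 : (0:ℝ) < K + 1 := by linarith
  have hn0 : (0:ℝ) < n := by nlinarith
  have hnnat : 0 < n := by exact_mod_cast hn0
  have hsqrt : Real.sqrt n > 0 := Real.sqrt_pos.mpr hn0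
  have hNR : (1:ℝ) ≤ N := by exact_mod_cast Nat.one_le_of_lt hN2
  have hNnR : ((N:ℝ)) ^ 3 ≤ n := by exact_mod_cast hNn
  -- per-pair facts
  have key : ∀ i ∈ Finset.Icc 1 N, ∀ j ∈ Finset.Icc (i+1) N,
      0 < Real.cos (t i j / Real.sqrt n) ∧
      |((n - i - 1 : ℕ) : ℝ) * Real.log (Real.cos (t i j / Real.sqrt n))
        + (t i j) ^ 2 / 2| ≤ C * N / n := by
    intro i hi j hj
    rw [Finset.mem_Icc] at hi hj
    have hij : i < j := hj.1
    have hjN : j ≤ N := hj.2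
    have h1i : 1 ≤ i := hi.1
    obtain ⟨hc1, hc2⟩ := ht i j h1i hij hjN
    set c := t i j with hc
    have hcK : c ^ 2 ≤ (K + 1) ^ 2 := by nlinarith
    set x := c / Real.sqrt n with hxdef
    have hx2 : x ^ 2 = c ^ 2 / n := by
      rw [hxdef, div_pow, Real.sq_sqrt (le_of_lt hn0)]
    have hx2half : x ^ 2 ≤ 1/2 := by
      rw [hx2]
      rw [div_le_iff₀ hn0]
      nlinarith
    obtain ⟨hcos, hlog⟩ := log_cos_bound_aux hx2half
    refine ⟨hcos, ?_⟩
    set L := Real.log (Real.cos x) with hLdef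
    -- i + 1 ≤ N ≤ n
    have hiN' : i + 1 ≤ N := Nat.succ_le_of_lt hij |>.trans hjN
    have hNn' : N ≤ n := le_trans (Nat.le_self_pow (by norm_num) N) hNn
    have hin : i + 1 ≤ n := hiN'.trans hNn'
    have hinR : (i : ℝ) + 1 ≤ (n : ℝ) := by exact_mod_cast hin
    have hi0R : (0:ℝ) ≤ (i : ℝ) := Nat.cast_nonneg i
    have hmcast : ((n - i - 1 : ℕ) : ℝ) = (n : ℝ) - (i : ℝ) - 1 := by
      have h := congrArg (Nat.cast : ℕ → ℝ) (show n - i - 1 + (i + 1) = n by omega)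
      push_cast at h
      linarith
    set m : ℝ := ((n - i - 1 : ℕ) : ℝ) with hm
    have hm0 : 0 ≤ m := Nat.cast_nonneg _
    have hmn : m ≤ n := by rw [hmcast]; linarith
    have hnm : (n : ℝ) - m = i + 1 := by rw [hmcast]; ring
    -- decompose
    have hdecomp : m * L + c ^ 2 / 2
        = m * (L + x ^ 2 / 2) + c ^ 2 * ((n:ℝ) - m) / (2 * n) := by
      rw [hx2]
      field_simp
      ring
    have habs1 : |m * (L + x ^ 2 / 2)| ≤ m * x ^ 4 := by
      rw [abs_mul, abs_of_nonneg hm0]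
      exact mul_le_mul_of_nonneg_left hlog hm0
    have hx4 : x ^ 4 = (c ^ 2 / n) ^ 2 := by rw [← hx2]; ring
    have hiR : (i : ℝ) + 1 ≤ N := by exact_mod_cast hiN'
    have h2 : m * x ^ 4 ≤ (K + 1) ^ 4 * N / n := by
      have hxb : x ^ 4 ≤ (K + 1) ^ 4 / (n:ℝ) ^ 2 := by
        have h1 : (c ^ 2) ^ 2 ≤ (K + 1) ^ 4 := by nlinarith [sq_nonneg c]
        rw [hx4, div_pow, div_le_div_iff₀ (by positivity) (by positivity)]
        nlinarith [mul_le_mul_of_nonneg_right h1 (sq_nonneg (n:ℝ))]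
      calc m * x ^ 4 ≤ (n:ℝ) * ((K + 1) ^ 4 / (n:ℝ) ^ 2) := by
            apply mul_le_mul hmn hxb (by positivity) hn0.le
        _ = (K + 1) ^ 4 / n := by field_simp
        _ ≤ (K + 1) ^ 4 * N / n := by
            rw [div_le_div_iff₀ hn0 hn0]
            nlinarith [mul_nonneg (mul_nonneg (pow_nonneg hK1.le 4) hn0.le)
              (sub_nonneg.mpr hNR)]
    have h3 : c ^ 2 * ((n:ℝ) - m) / (2 * n) ≤ (K + 1) ^ 2 * N / n := by
      rw [hnm]
      rw [div_le_div_iff₀ (by positivity) hn0]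
      have ha : c ^ 2 * ((i:ℝ) + 1) ≤ (K + 1) ^ 2 * N :=
        mul_le_mul hcK hiR (by positivity) (by positivity)
      nlinarith [mul_le_mul_of_nonneg_right ha hn0.le,
        mul_nonneg (mul_nonneg (sq_nonneg (K+1)) (Nat.cast_nonneg (α := ℝ) N)) hn0.le]
    have h3' : 0 ≤ c ^ 2 * ((n:ℝ) - m) / (2 * n) := by
      rw [hnm]; positivity
    calc |m * L + c ^ 2 / 2|
        = |m * (L + x ^ 2 / 2) + c ^ 2 * ((n:ℝ) - m) / (2 * n)| := by rw [hdecomp]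
      _ ≤ |m * (L + x ^ 2 / 2)| + |c ^ 2 * ((n:ℝ) - m) / (2 * n)| := abs_add_le _ _
      _ = |m * (L + x ^ 2 / 2)| + c ^ 2 * ((n:ℝ) - m) / (2 * n) := by
            rw [abs_of_nonneg h3']
      _ ≤ (K + 1) ^ 4 * N / n + (K + 1) ^ 2 * N / n := by
            linarith [habs1.trans h2]
      _ = C * N / n := by rw [hCdef]; ring
  -- rewrite products as exponentials
  set S1 : ℝ := ∑ i ∈ Finset.Icc 1 N, ∑ j ∈ Finset.Icc (i+1) N,
      ((n - i - 1 : ℕ) : ℝ) * Real.log (Real.cos (t i j / Real.sqrt n)) with hS1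
  set S2 : ℝ := ∑ i ∈ Finset.Icc 1 N, ∑ j ∈ Finset.Icc (i+1) N,
      (-(t i j) ^ 2 / 2) with hS2
  have hLHS : (∏ i ∈ Finset.Icc 1 N, ∏ j ∈ Finset.Icc (i + 1) N,
      Real.cos (t i j / Real.sqrt n) ^ (n - i - 1)) = Real.exp S1 := by
    rw [hS1, Real.exp_sum]
    apply Finset.prod_congr rfl
    intro i hi
    rw [Real.exp_sum]
    apply Finset.prod_congr rfl
    intro j hj
    have hcos := (key i hi j hj).1
    rw [Real.exp_nat_mul, Real.exp_log hcos]
  have hRHS : (∏ i ∈ Finset.Icc 1 N, ∏ j ∈ Finset.Icc (i + 1) N,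
      Real.exp (-(t i j) ^ 2 / 2)) = Real.exp S2 := by
    rw [hS2, Real.exp_sum]
    apply Finset.prod_congr rfl
    intro i hi
    rw [Real.exp_sum]
  set U : ℝ := S1 - S2 with hU
  refine ⟨Real.exp U - 1, ?_, ?_⟩
  · -- bound |θ|
    have hUsum : U = ∑ i ∈ Finset.Icc 1 N, ∑ j ∈ Finset.Icc (i+1) N,
        (((n - i - 1 : ℕ) : ℝ) * Real.log (Real.cos (t i j / Real.sqrt n))
          + (t i j) ^ 2 / 2) := by
      rw [hU, hS1, hS2, ← Finset.sum_sub_distrib]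
      apply Finset.sum_congr rfl
      intro i _
      rw [← Finset.sum_sub_distrib]
      apply Finset.sum_congr rfl
      intro j _
      ring
    have hCNn : (0:ℝ) ≤ C * N / n :=
      div_nonneg (mul_nonneg hC0.le (Nat.cast_nonneg N)) hn0.le
    have hUbound : |U| ≤ C * N ^ 3 / n := by
      rw [hUsum]
      refine le_trans (Finset.abs_sum_le_sum_abs _ _) ?_
      refine le_trans (Finset.sum_le_sum (fun i _ => Finset.abs_sum_le_sum_abs _ _)) ?_
      have hstep : ∀ i ∈ Finset.Icc 1 N,
          (∑ j ∈ Finset.Icc (i+1) N,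
            |((n - i - 1 : ℕ) : ℝ) * Real.log (Real.cos (t i j / Real.sqrt n))
              + (t i j) ^ 2 / 2|) ≤ (N:ℝ) * (C * N / n) := by
        intro i hi
        refine le_trans (Finset.sum_le_sum (fun j hj => (key i hi j hj).2)) ?_
        rw [Finset.sum_const, nsmul_eq_mul]
        have hcard : ((Finset.Icc (i+1) N).card : ℝ) ≤ (N:ℝ) := by
          have : (Finset.Icc (i+1) N).card ≤ N := by rw [Nat.card_Icc]; omega
          exact_mod_cast this
        exact mul_le_mul_of_nonneg_right hcard hCNn
      refine le_trans (Finset.sum_le_sum hstep) ?_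
      rw [Finset.sum_const, nsmul_eq_mul, Nat.card_Icc]
      have hNc : ((N + 1 - 1 : ℕ) : ℝ) = (N:ℝ) := by norm_num
      rw [hNc]
      exact le_of_eq (by ring)

    have hUC : |U| ≤ C := by
      refine hUbound.trans ?_
      rw [div_le_iff₀ hn0]
      nlinarith
    calc |Real.exp U - 1| ≤ |U| * Real.exp |U| := abs_exp_sub_one_le' U
      _ ≤ (C * N ^ 3 / n) * Real.exp C := by
          apply mul_le_mul hUbound (Real.exp_le_exp.mpr hUC) (Real.exp_pos _).le
          positivity
      _ = C * Real.exp C * N ^ 3 / n := by ring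
  · rw [hLHS, hRHS]
    have h1 : 1 + (Real.exp U - 1) = Real.exp U := by ring
    rw [h1, ← Real.exp_add, hU]
    congr 1
    ring
end

section
/- There is an absolute constant A > 0 such that for all integers n and N with 2 ≤ N and N³ ≤ n, there exists a real number p with |p| ≤ A·N³/n such that ∏_{l=1}^{N−1} ∏_{m=1}^{l} ω_{n−m}/(ω_{n−m+1}·√n) = (1/√(2π))^{C(N,2)} · (1 + p). -/
open Real Finset

/-- ω_k = 2·π^{k/2}/Γ(k/2), the (k-1)-dimensional surface volume of S^{k-1} ⊂ ℝ^k. -/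
noncomputable def sphereVol (k : ℕ) : ℝ :=
  2 * Real.pi ^ ((k : ℝ) / 2) / Real.Gamma ((k : ℝ) / 2)



private lemma gamma_sq_le {y : ℝ} (hy : 0 < y) :
    Real.Gamma (y + 1/2) ^ 2 ≤ Real.Gamma y * Real.Gamma (y + 1) := by
  have h := Real.convexOn_log_Gamma.2 (Set.mem_Ioi.mpr hy)
    (Set.mem_Ioi.mpr (by linarith : (0:ℝ) < y + 1))
    (by norm_num : (0:ℝ) ≤ 1/2) (by norm_num : (0:ℝ) ≤ 1/2) (by norm_num)
  simp only [smul_eq_mul, Function.comp_apply] at h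
  rw [show (1/2:ℝ) * y + 1/2 * (y + 1) = y + 1/2 by ring] at h
  have hG1 := Real.Gamma_pos_of_pos hy
  have hG2 := Real.Gamma_pos_of_pos (show (0:ℝ) < y + 1 by linarith)
  have hG3 := Real.Gamma_pos_of_pos (show (0:ℝ) < y + 1/2 by linarith)
  rw [← Real.log_le_log_iff (by positivity) (by positivity), Real.log_pow,
    Real.log_mul hG1.ne' hG2.ne']
  push_cast
  linarith

private lemma gamma_upper {x : ℝ} (hx : 1 ≤ x) :
    Real.Gamma (x + 1/2) ≤ Real.sqrt x * Real.Gamma x := by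
  have hx0 : (0:ℝ) < x := by linarith
  have h := gamma_sq_le hx0
  rw [Real.Gamma_add_one hx0.ne'] at h
  have hG := Real.Gamma_pos_of_pos hx0
  refine le_of_pow_le_pow_left₀ two_ne_zero (by positivity) ?_
  have hs : (Real.sqrt x * Real.Gamma x)^2 = x * Real.Gamma x ^ 2 := by
    rw [mul_pow, Real.sq_sqrt hx0.le]
  nlinarith [h]

private lemma aux_sqrt {x : ℝ} (hx : 1 ≤ x) :
    (1 - 1/(2*x)) * (Real.sqrt x * Real.sqrt (x + 1/2)) ≤ x := by
  have hx0 : (0:ℝ) < x := by linarith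
  set t := Real.sqrt x * Real.sqrt (x + 1/2) with ht
  have ht0 : 0 ≤ t := by positivity
  have ht2 : t^2 = x * (x + 1/2) := by
    rw [ht, mul_pow, Real.sq_sqrt hx0.le, Real.sq_sqrt (by linarith)]
  have key : (2*x - 1) * t ≤ 2*x^2 := by
    have hsq : ((2*x - 1)*t)^2 ≤ (2*x^2)^2 := by nlinarith [ht2]
    nlinarith [hsq, mul_nonneg (by linarith : (0:ℝ) ≤ 2*x - 1) ht0, sq_nonneg x]
  have h1 : 1 - 1/(2*x) = (2*x - 1)/(2*x) := by field_simp
  rw [h1, div_mul_eq_mul_div, div_le_iff₀ (by linarith : (0:ℝ) < 2*x)]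
  nlinarith [key]

private lemma gamma_lower {x : ℝ} (hx : 1 ≤ x) :
    (1 - 1/(2*x)) * (Real.sqrt x * Real.Gamma x) ≤ Real.Gamma (x + 1/2) := by
  have hx0 : (0:ℝ) < x := by linarith
  have hG := Real.Gamma_pos_of_pos hx0
  have hG2 := Real.Gamma_pos_of_pos (show (0:ℝ) < x + 1/2 by linarith)
  have h := gamma_sq_le (show (0:ℝ) < x + 1/2 by linarith)
  rw [show x + 1/2 + 1/2 = x + 1 by ring, Real.Gamma_add_one hx0.ne',
      Real.Gamma_add_one (show x + 1/2 ≠ 0 by positivity)] at h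
  have step : x * Real.Gamma x ≤ Real.sqrt (x + 1/2) * Real.Gamma (x + 1/2) := by
    refine le_of_pow_le_pow_left₀ two_ne_zero (by positivity) ?_
    have hs : (Real.sqrt (x + 1/2) * Real.Gamma (x + 1/2))^2
        = (x + 1/2) * Real.Gamma (x + 1/2)^2 := by
      rw [mul_pow, Real.sq_sqrt (by linarith)]
    nlinarith [h]
  have aux := aux_sqrt hx
  have hs : (0:ℝ) < Real.sqrt (x + 1/2) := Real.sqrt_pos.mpr (by linarith)
  rw [← mul_le_mul_iff_left₀ hs]
  calc (1 - 1/(2*x)) * (Real.sqrt x * Real.Gamma x) * Real.sqrt (x + 1/2)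
      = ((1 - 1/(2*x)) * (Real.sqrt x * Real.sqrt (x + 1/2))) * Real.Gamma x := by ring
    _ ≤ x * Real.Gamma x := mul_le_mul_of_nonneg_right aux hG.le
    _ ≤ Real.sqrt (x + 1/2) * Real.Gamma (x + 1/2) := step
    _ = Real.Gamma (x + 1/2) * Real.sqrt (x + 1/2) := by ring


private lemma sphereVol_div (k : ℕ) (hk : 2 ≤ k) :
    sphereVol k / sphereVol (k+1)
      = Real.Gamma ((k:ℝ)/2 + 1/2) / (Real.sqrt Real.pi * Real.Gamma ((k:ℝ)/2)) := by
  have hk0 : (0:ℝ) < (k:ℝ)/2 := by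
    have : (2:ℝ) ≤ (k:ℝ) := by exact_mod_cast hk
    linarith
  have hπ := Real.pi_pos
  unfold sphereVol
  rw [show ((k+1 : ℕ):ℝ) = (k:ℝ) + 1 by push_cast; ring,
      show ((k:ℝ)+1)/2 = (k:ℝ)/2 + 1/2 by ring,
      show Real.pi ^ ((k:ℝ)/2 + 1/2) = Real.pi ^ ((k:ℝ)/2) * Real.sqrt Real.pi by
        rw [Real.rpow_add hπ, Real.sqrt_eq_rpow]]
  have hG1 : 0 < Real.Gamma ((k:ℝ)/2) := Real.Gamma_pos_of_pos hk0
  have hG2 : 0 < Real.Gamma ((k:ℝ)/2 + 1/2) := Real.Gamma_pos_of_pos (by linarith)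
  have hp : (0:ℝ) < Real.pi ^ ((k:ℝ)/2) := Real.rpow_pos_of_pos hπ _
  have hs : (0:ℝ) < Real.sqrt Real.pi := Real.sqrt_pos.mpr hπ
  field_simp

private lemma factor_bounds (n m : ℕ) (hm : 1 ≤ m) (hmn : m + 2 ≤ n) :
    1 - ((m:ℝ)+1)/n
        ≤ Real.sqrt (2*Real.pi) * (sphereVol (n-m) / (sphereVol (n-m+1) * Real.sqrt n))
    ∧ Real.sqrt (2*Real.pi) * (sphereVol (n-m) / (sphereVol (n-m+1) * Real.sqrt n)) ≤ 1 := by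
  set k := n - m with hk
  have hk2 : 2 ≤ k := by omega
  have hkn : k ≤ n := by omega
  have hkr : (k:ℝ) = (n:ℝ) - (m:ℝ) := by
    rw [hk, Nat.cast_sub (by omega : m ≤ n)]
  have hn0 : (0:ℝ) < n := by exact_mod_cast (by omega : 0 < n)
  have hk0 : (0:ℝ) < k := by exact_mod_cast (by omega : 0 < k)
  have hk2' : (2:ℝ) ≤ (k:ℝ) := by exact_mod_cast hk2
  have hkn' : (k:ℝ) ≤ (n:ℝ) := by exact_mod_cast hkn
  set x := (k:ℝ)/2 with hx
  have hx1 : 1 ≤ x := by rw [hx]; linarith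
  have hx0 : (0:ℝ) < x := by linarith
  have hG1 : 0 < Real.Gamma x := Real.Gamma_pos_of_pos hx0
  have hG2 : 0 < Real.Gamma (x + 1/2) := Real.Gamma_pos_of_pos (by linarith)
  have hsn : (0:ℝ) < Real.sqrt n := Real.sqrt_pos.mpr hn0
  have hsπ : (0:ℝ) < Real.sqrt Real.pi := Real.sqrt_pos.mpr Real.pi_pos
  have hsk : (0:ℝ) < Real.sqrt k := Real.sqrt_pos.mpr hk0
  -- rewrite the term
  have hterm : Real.sqrt (2*Real.pi) * (sphereVol k / (sphereVol (k+1) * Real.sqrt n))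
      = Real.sqrt 2 * Real.Gamma (x + 1/2) / (Real.Gamma x * Real.sqrt n) := by
    have h1 : sphereVol k / (sphereVol (k+1) * Real.sqrt n)
        = (sphereVol k / sphereVol (k+1)) / Real.sqrt n := by
      rw [div_div]
    rw [h1, sphereVol_div k hk2, ← hx, Real.sqrt_mul (by norm_num : (0:ℝ) ≤ 2)]
    field_simp
  rw [hterm]
  have hs2x : Real.sqrt 2 * Real.sqrt x = Real.sqrt k := by
    rw [← Real.sqrt_mul (by norm_num : (0:ℝ) ≤ 2), hx, show (2:ℝ) * ((k:ℝ)/2) = (k:ℝ) by ring]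
  constructor
  · -- lower bound
    have hlow := gamma_lower hx1
    have h2x : 2 * x = (k:ℝ) := by rw [hx]; ring
    -- (1 - 1/k) * (k/n) ≤ g
    have hg : (1 - 1/(k:ℝ)) * ((k:ℝ)/n) ≤ Real.sqrt 2 * Real.Gamma (x + 1/2) / (Real.Gamma x * Real.sqrt n) := by
      rw [le_div_iff₀ (by positivity)]
      have hA : (1 - 1/(k:ℝ)) * ((k:ℝ)/n) * (Real.Gamma x * Real.sqrt n)
          = ((1 - 1/(k:ℝ)) * ((k:ℝ)/n * Real.sqrt n)) * Real.Gamma x := by ring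
      have hB : (k:ℝ)/n * Real.sqrt n ≤ Real.sqrt k := by
        have hnn : (n:ℝ) = Real.sqrt n * Real.sqrt n := (Real.mul_self_sqrt hn0.le).symm
        have hkk : (k:ℝ) = Real.sqrt k * Real.sqrt k := (Real.mul_self_sqrt hk0.le).symm
        rw [div_mul_eq_mul_div]
        rw [div_le_iff₀ hn0]
        calc (k:ℝ) * Real.sqrt n = (Real.sqrt k * Real.sqrt k) * Real.sqrt n := by rw [← hkk]
          _ ≤ (Real.sqrt k * Real.sqrt n) * Real.sqrt n := by
              have h := Real.sqrt_le_sqrt hkn'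
              nlinarith [mul_le_mul_of_nonneg_right h (mul_nonneg hsk.le hsn.le)]
          _ = Real.sqrt k * n := by rw [mul_assoc, ← hnn]
      have h1k : (0:ℝ) ≤ 1 - 1/(k:ℝ) := by
        have : 1/(k:ℝ) ≤ 1/2 := by
          apply div_le_div_of_nonneg_left (by norm_num) (by norm_num) hk2'
        linarith
      calc (1 - 1/(k:ℝ)) * ((k:ℝ)/n) * (Real.Gamma x * Real.sqrt n)
          = ((1 - 1/(k:ℝ)) * ((k:ℝ)/n * Real.sqrt n)) * Real.Gamma x := by ring
        _ ≤ ((1 - 1/(k:ℝ)) * Real.sqrt k) * Real.Gamma x := by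
            apply mul_le_mul_of_nonneg_right _ hG1.le
            exact mul_le_mul_of_nonneg_left hB h1k
        _ = Real.sqrt 2 * ((1 - 1/(2*x)) * (Real.sqrt x * Real.Gamma x)) := by
            rw [h2x, ← hs2x]; ring
        _ ≤ Real.sqrt 2 * Real.Gamma (x + 1/2) := by
            apply mul_le_mul_of_nonneg_left hlow (Real.sqrt_nonneg 2)
    refine le_trans ?_ hg
    have : (1 - 1/(k:ℝ)) * ((k:ℝ)/n) = ((k:ℝ) - 1)/n := by
      field_simp
    rw [this, hkr]
    apply le_of_eq
    field_simp
    ring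
  · -- upper bound
    rw [div_le_one (by positivity)]
    calc Real.sqrt 2 * Real.Gamma (x + 1/2)
        ≤ Real.sqrt 2 * (Real.sqrt x * Real.Gamma x) := by
          apply mul_le_mul_of_nonneg_left (gamma_upper hx1) (Real.sqrt_nonneg 2)
      _ = Real.sqrt k * Real.Gamma x := by rw [← hs2x]; ring
      _ ≤ Real.sqrt n * Real.Gamma x := by
          apply mul_le_mul_of_nonneg_right (Real.sqrt_le_sqrt hkn') hG1.le
      _ = Real.Gamma x * Real.sqrt n := by ring

private lemma prod_bounds {ι : Type*} (s : Finset ι) (f δ : ι → ℝ)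
    (h : ∀ i ∈ s, 0 ≤ δ i ∧ δ i ≤ 1 ∧ 1 - δ i ≤ f i ∧ f i ≤ 1) :
    1 - ∑ i ∈ s, δ i ≤ ∏ i ∈ s, f i ∧ ∏ i ∈ s, f i ≤ 1 := by
  induction s using Finset.cons_induction with
  | empty => simp
  | cons a s ha ih =>
    obtain ⟨hδ0, hδ1, hf1, hf2⟩ := h a (Finset.mem_cons_self a s)
    obtain ⟨ih1, ih2⟩ := ih (fun i hi => h i (Finset.mem_cons_of_mem hi))
    have hfa0 : 0 ≤ f a := by linarith
    have hP0 : 0 ≤ ∏ i ∈ s, f i := Finset.prod_nonneg (fun i hi => by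
      obtain ⟨h1, h2, h3, h4⟩ := h i (Finset.mem_cons_of_mem hi); linarith)
    have hS0 : 0 ≤ ∑ i ∈ s, δ i := Finset.sum_nonneg (fun i hi =>
      (h i (Finset.mem_cons_of_mem hi)).1)
    rw [Finset.prod_cons, Finset.sum_cons]
    constructor
    · have h1 : (1 - δ a) * ∏ i ∈ s, f i ≤ f a * ∏ i ∈ s, f i :=
        mul_le_mul_of_nonneg_right hf1 hP0
      have h2 : (1 - δ a) * (1 - ∑ i ∈ s, δ i) ≤ (1 - δ a) * ∏ i ∈ s, f i :=
        mul_le_mul_of_nonneg_left ih1 (by linarith)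
      nlinarith
    · exact mul_le_one₀ hf2 hP0 ih2

private lemma sum_Icc_id_choose (N : ℕ) (hN : 1 ≤ N) :
    ∑ l ∈ Icc 1 (N-1), l = N.choose 2 := by
  induction N with
  | zero => omega
  | succ M ih =>
    rcases Nat.eq_or_lt_of_le hN with h | h
    · simp [← h]
    · have hM : 1 ≤ M := by omega
      have e0 : M + 1 - 1 = (M - 1) + 1 := by omega
      rw [e0, Finset.sum_Icc_succ_top (by omega), ih hM,
        show (M - 1) + 1 = M by omega]
      rw [Nat.choose_two_right, Nat.choose_two_right]
      obtain ⟨m, rfl⟩ := Nat.exists_eq_add_of_le hM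
      have e1 : 1 + m - 1 = m := by omega
      have e2 : 1 + m + 1 - 1 = 1 + m := by omega
      rw [e1, e2]
      have h2 : 2 ∣ (1 + m) * m := by
        have h := Nat.even_mul_succ_self m
        rw [mul_comm] at h
        have : (m + 1) * m = (1 + m) * m := by ring
        rw [this] at h
        exact h.two_dvd
      have h3 : (1 + m + 1) * (1 + m) = (1 + m) * m + 2 * (1 + m) := by ring
      omega

/-- ∏_{l=1}^{N-1} ∏_{m=1}^{l} ω_{n-m}/(ω_{n-m+1}·√n)
= (1/√(2π))^{C(N,2)}·(1+p) with |p| ≤ A·N³/n. -/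
theorem prod_sphere_vol_ratio :
    ∃ A : ℝ, 0 < A ∧
      ∀ (n N : ℕ), 2 ≤ N → N ^ 3 ≤ n →
      ∃ p : ℝ, |p| ≤ A * (N : ℝ) ^ 3 / (n : ℝ) ∧
        (∏ l ∈ Finset.Icc 1 (N - 1), ∏ m ∈ Finset.Icc 1 l,
            sphereVol (n - m) / (sphereVol (n - m + 1) * Real.sqrt n)) =
        (Real.sqrt (2 * Real.pi))⁻¹ ^ (N.choose 2) * (1 + p) := by
  refine ⟨1, one_pos, ?_⟩
  intro n N hN hn
  have hn8 : 8 ≤ n := by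
    have : 2^3 ≤ N^3 := Nat.pow_le_pow_left hN 3
    omega
  have hNn : N ≤ n := le_trans (Nat.le_self_pow (by norm_num) N) hn
  have hNN : N * N ≤ n := by
    have h1 : N * N * 1 ≤ N * N * N := Nat.mul_le_mul_left _ (by omega)
    have h2 : N ^ 3 = N * N * N := by ring
    omega
  have hn0 : (0:ℝ) < n := by exact_mod_cast (by omega : 0 < n)
  have hN0 : (0:ℝ) < N := by exact_mod_cast (by omega : 0 < N)
  have hN2 : (2:ℝ) ≤ N := by exact_mod_cast hN
  have hNn' : (N:ℝ) ≤ n := by exact_mod_cast hNn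
  have hN1 : N + 1 ≤ n := by nlinarith [hNN]
  set c := (Real.sqrt (2*Real.pi))⁻¹ with hc
  have hcpos : 0 < Real.sqrt (2*Real.pi) := Real.sqrt_pos.mpr (by positivity)
  set F : ℕ → ℝ := fun m =>
    Real.sqrt (2*Real.pi) * (sphereVol (n-m) / (sphereVol (n-m+1) * Real.sqrt n)) with hF
  set ε : ℝ := (N:ℝ)/n with hε
  have hε0 : 0 ≤ ε := by positivity
  have hε1 : ε ≤ 1 := by rw [hε, div_le_one hn0]; exact hNn'
  have hFb : ∀ m ∈ Icc 1 (N-1), 1 - ε ≤ F m ∧ F m ≤ 1 := by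
    intro m hm
    rw [Finset.mem_Icc] at hm
    have hb := factor_bounds n m hm.1 (by omega)
    refine ⟨le_trans ?_ hb.1, hb.2⟩
    have hmN : (m:ℝ) + 1 ≤ N := by exact_mod_cast (by omega : m + 1 ≤ N)
    have hle : ((m:ℝ)+1)/n ≤ ε := by
      rw [hε]
      gcongr
    linarith
  have hinner : ∀ l ∈ Icc 1 (N-1),
      1 - (l:ℝ)*ε ≤ ∏ m ∈ Icc 1 l, F m ∧ ∏ m ∈ Icc 1 l, F m ≤ 1 := by
    intro l hl
    rw [Finset.mem_Icc] at hl
    have h := prod_bounds (Icc 1 l) F (fun _ => ε) (by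
      intro m hm
      rw [Finset.mem_Icc] at hm
      have := hFb m (Finset.mem_Icc.mpr ⟨hm.1, le_trans hm.2 hl.2⟩)
      exact ⟨hε0, hε1, this.1, this.2⟩)
    have hsum : ∑ _m ∈ Icc 1 l, ε = (l:ℝ) * ε := by
      rw [Finset.sum_const, Nat.card_Icc]
      simp [nsmul_eq_mul]
    rwa [hsum] at h
  have houter := prod_bounds (Icc 1 (N-1)) (fun l => ∏ m ∈ Icc 1 l, F m)
    (fun l => (l:ℝ)*ε) (by
      intro l hl
      have hi := hinner l hl
      rw [Finset.mem_Icc] at hl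
      have hlN : l * N ≤ n := by
        have h1 : l * N ≤ N * N := Nat.mul_le_mul_right N (by omega)
        omega
      refine ⟨by positivity, ?_, hi.1, hi.2⟩
      show (l:ℝ)*ε ≤ 1
      have heq : (l:ℝ)*ε = ((l*N : ℕ):ℝ)/n := by rw [hε]; push_cast; ring
      rw [heq, div_le_one hn0]
      exact_mod_cast hlN)
  have hsum2 : ∑ l ∈ Icc 1 (N-1), (l:ℝ)*ε = (N.choose 2:ℝ) * ε := by
    rw [← Finset.sum_mul]
    congr 1
    rw [← Nat.cast_sum, sum_Icc_id_choose N (by omega)]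
  have hchoose : (N.choose 2 : ℝ) = (N:ℝ)*((N:ℝ)-1)/2 := Nat.cast_choose_two ℝ N
  have hS : (N.choose 2:ℝ) * ε ≤ 1 * (N:ℝ)^3 / n := by
    rw [hchoose, hε, show (N:ℝ)*((N:ℝ)-1)/2 * ((N:ℝ)/n) = ((N:ℝ)*((N:ℝ)-1)/2*(N:ℝ))/n by ring,
      show 1 * (N:ℝ)^3 / n = ((N:ℝ)^3)/n by ring]
    gcongr
    nlinarith
  set P := ∏ l ∈ Icc 1 (N-1), ∏ m ∈ Icc 1 l, F m with hP
  refine ⟨P - 1, ?_, ?_⟩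
  · rw [abs_le]
    constructor
    · have := houter.1
      rw [hsum2] at this
      nlinarith [hS]
    · have := houter.2
      have hpos : 0 ≤ 1 * (N:ℝ)^3 / n := by positivity
      linarith
  · have hterm_eq : ∀ m : ℕ,
        sphereVol (n-m) / (sphereVol (n-m+1) * Real.sqrt n) = c * F m := by
      intro m
      rw [hF, hc]
      exact (inv_mul_cancel_left₀ hcpos.ne' _).symm
    calc ∏ l ∈ Finset.Icc 1 (N - 1), ∏ m ∈ Finset.Icc 1 l,
            sphereVol (n - m) / (sphereVol (n - m + 1) * Real.sqrt n)
        = ∏ l ∈ Icc 1 (N-1), (c ^ l * ∏ m ∈ Icc 1 l, F m) := by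
          apply Finset.prod_congr rfl
          intro l hl
          rw [show (∏ m ∈ Icc 1 l, sphereVol (n - m) / (sphereVol (n - m + 1) * Real.sqrt n))
              = ∏ m ∈ Icc 1 l, (c * F m) from Finset.prod_congr rfl (fun m _ => hterm_eq m)]
          rw [Finset.prod_mul_distrib, Finset.prod_const, Nat.card_Icc]
          simp
      _ = (∏ l ∈ Icc 1 (N-1), c ^ l) * P := Finset.prod_mul_distrib
      _ = c ^ (∑ l ∈ Icc 1 (N-1), l) * P := by rw [Finset.prod_pow_eq_pow_sum]
      _ = c ^ (N.choose 2) * (1 + (P - 1)) := by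
          rw [sum_Icc_id_choose N (by omega)]
          ring
end
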